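/- Real Schur form of real skew-circulant matrices: for a real skew-circulant matrix S of order n = 2m, the matrix Ũ = [√2 c̃_0, …, √2 c̃_{m-1}, √2 s̃_{m-1}, …, √2 s̃_0] is orthogonal and Ũ^T S Ũ equals the matrix whose (j,j) entries are α̃_j (for the first m) and α̃_{m-1-j'} on the second half, with antidiagonal blocks ±β̃_k, i.e., after permutation it is the direct sum of 2×2 blocks [[α̃_k, β̃_k],[-β̃_k, α̃_k]] for k = 0,…,m-1. -/

import Mathlib

open Complex Finset
lemma expsum (n : ℕ) (hn : 0 < n) (t : ℤ) (ht : ¬ (n:ℤ) ∣ t) :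
    ∑ j : Fin n, Complex.exp (2 * Real.pi * Complex.I * t * j / n) = 0 := by
  have hn' : (n:ℂ) ≠ 0 := Nat.cast_ne_zero.mpr hn.ne'
  set z : ℂ := Complex.exp (2 * Real.pi * Complex.I * t / n) with hzdef
  have hz : ∀ j : Fin n, Complex.exp (2 * Real.pi * Complex.I * t * j / n) = z ^ (j:ℕ) := by
    intro j
    rw [hzdef, ← Complex.exp_nat_mul]
    ring_nf
  have hzn : z ^ n = 1 := by
    rw [hzdef, ← Complex.exp_nat_mul]
    have : (n:ℂ) * (2 * Real.pi * Complex.I * t / n) = t * (2 * Real.pi * Complex.I) := by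
      field_simp
    rw [this]
    exact Complex.exp_int_mul_two_pi_mul_I t
  have hz1 : z ≠ 1 := by
    rw [hzdef, Ne, Complex.exp_eq_one_iff]
    rintro ⟨k, hk⟩
    apply ht
    have hpi : (Real.pi : ℂ) ≠ 0 := Complex.ofReal_ne_zero.mpr Real.pi_ne_zero
    have hI : Complex.I ≠ 0 := Complex.I_ne_zero
    field_simp at hk
    have hct : (t : ℂ) = k * n := by
      have h2 : (2 * (Real.pi:ℂ) * Complex.I) ≠ 0 := by
        simp [hpi, hI]
      apply mul_left_cancel₀ h2
      linear_combination (2 * (Real.pi:ℂ) * Complex.I) * hk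
    have ht' : t = k * n := by exact_mod_cast hct
    exact ⟨k, by linarith⟩
  simp only [hz]
  rw [Fin.sum_univ_eq_sum_range, geom_sum_eq hz1, hzn]
  simp

lemma csum_aux (n : ℕ) (hn : 0 < n) (t : ℤ) (ht : ¬ (n:ℤ) ∣ t) :
    (∑ j : Fin n, Real.cos (2*Real.pi*t*j/n)) = 0 ∧
    (∑ j : Fin n, Real.sin (2*Real.pi*t*j/n)) = 0 := by
  have h := expsum n hn t ht
  have he : ∀ j : Fin n, Complex.exp (2 * Real.pi * Complex.I * t * j / n)
      = (Real.cos (2*Real.pi*t*j/n) : ℂ) + (Real.sin (2*Real.pi*t*j/n) : ℂ) * Complex.I := by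
    intro j
    have harg : (2 * Real.pi * Complex.I * t * j / n : ℂ)
        = ((2*Real.pi*t*j/n : ℝ) : ℂ) * Complex.I := by
      push_cast; ring
    rw [harg, Complex.exp_mul_I, Complex.ofReal_cos, Complex.ofReal_sin]
  rw [Finset.sum_congr rfl (fun j _ => he j)] at h
  rw [Finset.sum_add_distrib, ← Finset.sum_mul] at h
  rw [← Complex.ofReal_sum, ← Complex.ofReal_sum] at h
  rw [Complex.ext_iff] at h
  simp only [Complex.add_re, Complex.ofReal_re, Complex.mul_re, Complex.I_re, Complex.I_im,
    Complex.ofReal_im, Complex.add_im, Complex.mul_im, Complex.zero_re, Complex.zero_im] at h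
  constructor
  · linarith [h.1]
  · linarith [h.2]

lemma cossum (n : ℕ) (hn : 0 < n) (t : ℤ) (ht : ¬ (n:ℤ) ∣ t) :
    (∑ j : Fin n, Real.cos (2*Real.pi*t*j/n)) = 0 := (csum_aux n hn t ht).1

lemma sinsum (n : ℕ) (hn : 0 < n) (t : ℤ) :
    (∑ j : Fin n, Real.sin (2*Real.pi*t*j/n)) = 0 := by
  by_cases ht : (n:ℤ) ∣ t
  · obtain ⟨q, rfl⟩ := ht
    apply Finset.sum_eq_zero
    intro j _
    have hn' : (n:ℝ) ≠ 0 := Nat.cast_ne_zero.mpr hn.ne'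
    have : (2*Real.pi*((n:ℤ)*q : ℤ)*j/n : ℝ) = ((2*q*j : ℤ) : ℝ) * Real.pi := by
      push_cast; field_simp
    rw [this, Real.sin_int_mul_pi]
  · exact (csum_aux n hn t ht).2

lemma cossum' (m : ℕ) (hm : 0 < m) (t : ℤ) (ht : ¬ ((2*m : ℕ) : ℤ) ∣ t) :
    (∑ j : Fin (2*m), Real.cos (2*Real.pi*t*j/(2*(m:ℝ)))) = 0 := by
  have h := cossum (2*m) (by omega) t ht
  push_cast at h
  exact h

lemma sinsum' (m : ℕ) (hm : 0 < m) (t : ℤ) :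
    (∑ j : Fin (2*m), Real.sin (2*Real.pi*t*j/(2*(m:ℝ)))) = 0 := by
  have h := sinsum (2*m) (by omega) t
  push_cast at h
  exact h

lemma nodvd (m : ℕ) (hm : 0 < m) (t : ℤ) (ht0 : t ≠ 0) (htlt : |t| < 2*m) :
    ¬ ((2*m : ℕ) : ℤ) ∣ t := by
  intro hd
  exact ht0 (Int.eq_zero_of_abs_lt_dvd (by exact_mod_cast hd) (by push_cast; linarith))

lemma cc_prod (x y : ℝ) : Real.cos x * Real.cos y = (Real.cos (x - y) + Real.cos (x + y))/2 := by
  rw [Real.cos_add, Real.cos_sub]; ring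

lemma ss_prod (x y : ℝ) : Real.sin x * Real.sin y = (Real.cos (x - y) - Real.cos (x + y))/2 := by
  rw [Real.cos_add, Real.cos_sub]; ring

lemma cs_prod (x y : ℝ) : Real.cos x * Real.sin y = (Real.sin (x + y) - Real.sin (x - y))/2 := by
  rw [Real.sin_add, Real.sin_sub]; ring

section trig
variable (m : ℕ) (hm : 0 < m)

lemma angle_sub (i i' : ℕ) (j : Fin (2*m)) (hm : 0 < m) :
    Real.pi*(2*i+1)*j/(2*m) - Real.pi*(2*i'+1)*j/(2*m)
      = 2*Real.pi*(((i:ℤ) - i' : ℤ))*j/(2*m) := by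
  have : ((2*m:ℕ):ℝ) ≠ 0 := by positivity
  push_cast
  field_simp
  ring

lemma angle_add (i i' : ℕ) (j : Fin (2*m)) (hm : 0 < m) :
    Real.pi*(2*i+1)*j/(2*m) + Real.pi*(2*i'+1)*j/(2*m)
      = 2*Real.pi*(((i:ℤ) + i' + 1 : ℤ))*j/(2*m) := by
  have : ((2*m:ℕ):ℝ) ≠ 0 := by positivity
  push_cast
  field_simp
  ring

lemma sum_cc (i i' : ℕ) (hi : i < m) (hi' : i' < m) (hm : 0 < m) :
    ∑ j : Fin (2*m), Real.cos (Real.pi*(2*i+1)*j/(2*m)) * Real.cos (Real.pi*(2*i'+1)*j/(2*m))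
      = if i = i' then (m:ℝ) else 0 := by
  have key : ∀ j : Fin (2*m), Real.cos (Real.pi*(2*i+1)*j/(2*m)) * Real.cos (Real.pi*(2*i'+1)*j/(2*m))
      = (Real.cos (2*Real.pi*(((i:ℤ) - i' : ℤ))*j/(2*m)) + Real.cos (2*Real.pi*(((i:ℤ)+i'+1 : ℤ))*j/(2*m)))/2 := by
    intro j
    rw [cc_prod, angle_sub m i i' j hm, angle_add m i i' j hm]
  rw [Finset.sum_congr rfl (fun j _ => key j)]
  rw [← Finset.sum_div, Finset.sum_add_distrib]
  have h2 : ∑ j : Fin (2*m), Real.cos (2*Real.pi*(((i:ℤ)+i'+1 : ℤ))*j/(2*m)) = 0 := by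
    apply cossum' m hm
    apply nodvd m hm _ (by omega)
    rw [_root_.abs_of_nonneg (by omega)]
    push_cast
    omega
  rw [h2]
  by_cases h : i = i'
  · subst h
    rw [if_pos rfl]
    have h1 : ∀ j : Fin (2*m), Real.cos (2*Real.pi*(((i:ℤ) - i : ℤ))*j/(2*(m:ℝ))) = 1 := by
      intro j; simp
    rw [Finset.sum_congr rfl (fun j _ => h1 j)]
    simp
  · rw [if_neg h]
    have h1 : ∑ j : Fin (2*m), Real.cos (2*Real.pi*(((i:ℤ) - i' : ℤ))*j/(2*m)) = 0 := by
      apply cossum' m hm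
      apply nodvd m hm _ (by omega)
      rw [abs_lt]
      constructor <;> push_cast <;> omega
    rw [h1]
    simp

lemma sum_ss (i i' : ℕ) (hi : i < m) (hi' : i' < m) (hm : 0 < m) :
    ∑ j : Fin (2*m), Real.sin (Real.pi*(2*i+1)*j/(2*m)) * Real.sin (Real.pi*(2*i'+1)*j/(2*m))
      = if i = i' then (m:ℝ) else 0 := by
  have key : ∀ j : Fin (2*m), Real.sin (Real.pi*(2*i+1)*j/(2*m)) * Real.sin (Real.pi*(2*i'+1)*j/(2*m))
      = (Real.cos (2*Real.pi*(((i:ℤ) - i' : ℤ))*j/(2*m)) - Real.cos (2*Real.pi*(((i:ℤ)+i'+1 : ℤ))*j/(2*m)))/2 := by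
    intro j
    rw [ss_prod, angle_sub m i i' j hm, angle_add m i i' j hm]
  rw [Finset.sum_congr rfl (fun j _ => key j)]
  rw [← Finset.sum_div, Finset.sum_sub_distrib]
  have h2 : ∑ j : Fin (2*m), Real.cos (2*Real.pi*(((i:ℤ)+i'+1 : ℤ))*j/(2*m)) = 0 := by
    apply cossum' m hm
    apply nodvd m hm _ (by omega)
    rw [_root_.abs_of_nonneg (by omega)]
    omega
  rw [h2]
  by_cases h : i = i'
  · subst h
    rw [if_pos rfl]
    have h1 : ∀ j : Fin (2*m), Real.cos (2*Real.pi*(((i:ℤ) - i : ℤ))*j/(2*(m:ℝ))) = 1 := by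
      intro j; simp
    rw [Finset.sum_congr rfl (fun j _ => h1 j)]
    simp
  · rw [if_neg h]
    have h1 : ∑ j : Fin (2*m), Real.cos (2*Real.pi*(((i:ℤ) - i' : ℤ))*j/(2*m)) = 0 := by
      apply cossum' m hm
      apply nodvd m hm _ (by omega)
      rw [abs_lt]
      constructor <;> push_cast <;> omega
    rw [h1]
    simp

lemma sum_cs (i i' : ℕ) (hm : 0 < m) :
    ∑ j : Fin (2*m), Real.cos (Real.pi*(2*i+1)*j/(2*m)) * Real.sin (Real.pi*(2*i'+1)*j/(2*m)) = 0 := by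
  have key : ∀ j : Fin (2*m), Real.cos (Real.pi*(2*i+1)*j/(2*m)) * Real.sin (Real.pi*(2*i'+1)*j/(2*m))
      = (Real.sin (2*Real.pi*(((i:ℤ)+i'+1 : ℤ))*j/(2*m)) - Real.sin (2*Real.pi*(((i:ℤ) - i' : ℤ))*j/(2*m)))/2 := by
    intro j
    rw [cs_prod, angle_sub m i i' j hm, angle_add m i i' j hm]
  rw [Finset.sum_congr rfl (fun j _ => key j)]
  rw [← Finset.sum_div, Finset.sum_sub_distrib]
  rw [sinsum' m hm, sinsum' m hm]
  simp


end trig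

lemma eigen (m : ℕ) (hm : 0 < m) (s : ℕ → ℝ) (k : ℕ) (j : Fin (2*m)) :
    ∑ a : Fin (2*m),
      ((if (a.1 : ℕ) ≤ j.1 then s (j.1 - a.1) else -s (2*m - (a.1 - j.1))) : ℂ) *
        Complex.exp (Real.pi * Complex.I * (2*(k:ℂ)+1) * (a.1:ℂ) / (2*(m:ℂ)))
    = (∑ b : Fin (2*m), (s b.1 : ℂ) *
        Complex.exp (-(Real.pi * Complex.I * (2*(k:ℂ)+1) * (b.1:ℂ) / (2*(m:ℂ))))) *
      Complex.exp (Real.pi * Complex.I * (2*(k:ℂ)+1) * (j.1:ℂ) / (2*(m:ℂ))) := by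
  have hm2 : (0:ℕ) < 2*m := by omega
  haveI : NeZero (2*m) := ⟨by omega⟩
  set z : ℂ := Complex.exp (Real.pi * Complex.I * (2*(k:ℂ)+1) / (2*(m:ℂ))) with hzdef
  have hz0 : z ≠ 0 := Complex.exp_ne_zero _
  have hz : ∀ x : ℕ, Complex.exp (Real.pi * Complex.I * (2*(k:ℂ)+1) * (x:ℂ) / (2*(m:ℂ))) = z ^ x := by
    intro x
    rw [hzdef, ← Complex.exp_nat_mul]
    ring_nf
  have hzn : z ^ (2*m) = -1 := by
    rw [hzdef, ← Complex.exp_nat_mul]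
    have hm' : (m:ℂ) ≠ 0 := Nat.cast_ne_zero.mpr hm.ne'
    have harg : ((2*m : ℕ):ℂ) * (Real.pi * Complex.I * (2*(k:ℂ)+1) / (2*(m:ℂ)))
        = ((2*k+1 : ℕ):ℂ) * (Real.pi * Complex.I) := by
      push_cast
      field_simp
    rw [harg, Complex.exp_nat_mul, Complex.exp_pi_mul_I]
    rw [pow_succ, pow_mul]
    simp
  rw [Finset.sum_mul]
  refine (Fintype.sum_equiv (Equiv.subLeft j) _ _ ?_).symm
  intro b
  show (s b.1 : ℂ) * Complex.exp (-(Real.pi * Complex.I * (2*(k:ℂ)+1) * (b.1:ℂ) / (2*(m:ℂ)))) *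
      Complex.exp (Real.pi * Complex.I * (2*(k:ℂ)+1) * (j.1:ℂ) / (2*(m:ℂ)))
    = _
  simp only [Equiv.subLeft_apply]
  rw [hz j.1, Complex.exp_neg, hz b.1, hz ((j - b : Fin (2*m)) : ℕ)]
  have hcoe : ((j - b : Fin (2*m)) : ℕ) = (2*m - (b:ℕ) + (j:ℕ)) % (2*m) := by
    rw [Fin.sub_def]
  by_cases hb : (b:ℕ) ≤ (j:ℕ)
  · have hval : ((j - b : Fin (2*m)) : ℕ) = (j:ℕ) - (b:ℕ) := by
      rw [hcoe]
      have h1 : 2*m - (b:ℕ) + (j:ℕ) = ((j:ℕ) - (b:ℕ)) + 2*m := by omega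
      rw [h1, Nat.add_mod_right, Nat.mod_eq_of_lt (by omega)]
    rw [hval, if_pos (by omega : (j:ℕ) - (b:ℕ) ≤ (j:ℕ))]
    have hs : s ((j:ℕ) - ((j:ℕ) - (b:ℕ))) = s b.1 := by congr 1; omega
    rw [hs, pow_sub₀ z hz0 (by omega : (b:ℕ) ≤ (j:ℕ))]
    ring
  · have hval : ((j - b : Fin (2*m)) : ℕ) = 2*m - (b:ℕ) + (j:ℕ) := by
      rw [hcoe, Nat.mod_eq_of_lt (by omega)]
    rw [hval, if_neg (by omega)]
    have hs : s (2*m - ((2*m - (b:ℕ) + (j:ℕ)) - (j:ℕ))) = s b.1 := by congr 1; omega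
    have hexp : 2*m - (b:ℕ) + (j:ℕ) = (2*m - (b:ℕ)) + (j:ℕ) := rfl
    rw [hs, hexp, pow_add, pow_sub₀ z hz0 (by omega : (b:ℕ) ≤ 2*m), hzn]
    ring

noncomputable def lamc (m : ℕ) (s : ℕ → ℝ) (k : ℕ) : ℂ :=
  ∑ b : Fin (2*m), (s b.1 : ℂ) *
    Complex.exp (-(Real.pi * Complex.I * (2*(k:ℂ)+1) * (b.1:ℂ) / (2*(m:ℂ))))

lemma mul_reim (w : ℂ) (c s' : ℝ) :
    w * ((c:ℂ) + (s':ℂ) * Complex.I)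
      = ((w.re * c - w.im * s' : ℝ) : ℂ) + ((w.im * c + w.re * s' : ℝ):ℂ) * Complex.I := by
  apply Complex.ext <;>
    simp [Complex.mul_re, Complex.mul_im, Complex.add_re, Complex.add_im] <;> ring

lemma eigenReIm (m : ℕ) (hm : 0 < m) (s : ℕ → ℝ) (k : ℕ) (j : Fin (2*m)) :
    (∑ a : Fin (2*m),
      (if (a.1 : ℕ) ≤ j.1 then s (j.1 - a.1) else -s (2*m - (a.1 - j.1))) *
        Real.cos (Real.pi*(2*k+1)*a.1/(2*m))
      = (lamc m s k).re * Real.cos (Real.pi*(2*k+1)*j.1/(2*m))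
        - (lamc m s k).im * Real.sin (Real.pi*(2*k+1)*j.1/(2*m))) ∧
    (∑ a : Fin (2*m),
      (if (a.1 : ℕ) ≤ j.1 then s (j.1 - a.1) else -s (2*m - (a.1 - j.1))) *
        Real.sin (Real.pi*(2*k+1)*a.1/(2*m))
      = (lamc m s k).im * Real.cos (Real.pi*(2*k+1)*j.1/(2*m))
        + (lamc m s k).re * Real.sin (Real.pi*(2*k+1)*j.1/(2*m))) := by
  have H := eigen m hm s k j
  have hexp : ∀ x : ℕ, Complex.exp (Real.pi * Complex.I * (2*(k:ℂ)+1) * (x:ℂ) / (2*(m:ℂ)))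
      = ((Real.cos (Real.pi*(2*k+1)*x/(2*m)) : ℝ) : ℂ)
        + ((Real.sin (Real.pi*(2*k+1)*x/(2*m)) : ℝ) : ℂ) * Complex.I := by
    intro x
    have harg : (Real.pi * Complex.I * (2*(k:ℂ)+1) * (x:ℂ) / (2*(m:ℂ)))
        = ((Real.pi*(2*k+1)*x/(2*m) : ℝ) : ℂ) * Complex.I := by
      push_cast; ring
    rw [harg, Complex.exp_mul_I, Complex.ofReal_cos, Complex.ofReal_sin]
  have hterm : ∀ a : Fin (2*m),
      ((if (a.1 : ℕ) ≤ j.1 then (s (j.1 - a.1) : ℂ) else -(s (2*m - (a.1 - j.1)) : ℂ))) *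
        Complex.exp (Real.pi * Complex.I * (2*(k:ℂ)+1) * (a.1:ℂ) / (2*(m:ℂ)))
      = (((if (a.1 : ℕ) ≤ j.1 then s (j.1 - a.1) else -s (2*m - (a.1 - j.1)))
            * Real.cos (Real.pi*(2*k+1)*a.1/(2*m)) : ℝ) : ℂ)
        + (((if (a.1 : ℕ) ≤ j.1 then s (j.1 - a.1) else -s (2*m - (a.1 - j.1)))
            * Real.sin (Real.pi*(2*k+1)*a.1/(2*m)) : ℝ) : ℂ) * Complex.I := by
    intro a
    rw [hexp a.1]
    split_ifs <;> push_cast <;> ring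
  rw [Finset.sum_congr rfl (fun a _ => hterm a)] at H
  rw [Finset.sum_add_distrib, ← Finset.sum_mul, ← Complex.ofReal_sum, ← Complex.ofReal_sum] at H
  rw [hexp j.1, mul_reim] at H
  rw [Complex.ext_iff] at H
  simp only [Complex.add_re, Complex.ofReal_re, Complex.mul_re, Complex.I_re, Complex.I_im,
    Complex.ofReal_im, Complex.add_im, Complex.mul_im, Complex.zero_re, Complex.zero_im] at H
  unfold lamc
  constructor
  · linarith [H.1]
  · linarith [H.2]

lemma sum_pair' {N : ℕ} (i i' : Fin N) (h : i ≠ i') (f g : Fin N → ℝ)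
    (hg : ∀ a, a ≠ i → a ≠ i' → g a = 0) :
    ∑ a : Fin N, f a * g a = f i * g i + f i' * g i' := by
  have hsub : ({i, i'} : Finset (Fin N)) ⊆ Finset.univ := Finset.subset_univ _
  rw [← Finset.sum_subset hsub (fun a _ ha => by
    rw [hg a (fun h1 => ha (by simp [h1])) (fun h2 => ha (by simp [h2])), mul_zero])]
  rw [Finset.sum_pair h]

open Matrix

/-- **Real Schur form of real skew-circulant matrices, even order.**
For a real skew-circulant matrix `S` of order `n = 2m`, the matrix
`Ũ = [√2 c̃_0, …, √2 c̃_{m-1}, √2 s̃_{m-1}, …, √2 s̃_0]` (with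
`c̃_k j = cos(π(2k+1)j/n)/√n`, `s̃_k j = sin(π(2k+1)j/n)/√n`) is orthogonal and
`Ũᵀ S Ũ = Σ` where `Σ` has diagonal entries `α̃_i` (first half) and `α̃_{n-1-i}`
(second half), anti-diagonal entries `β̃_i` at `(i, n-1-i)` for `i < m` and `-β̃_{n-1-i}`
for `i ≥ m`, and zeros elsewhere — i.e. after permutation the direct sum of the
`2 × 2` blocks `[[α̃_k, β̃_k], [-β̃_k, α̃_k]]`, `k = 0, …, m-1`, where
`λ̃_k = α̃_k + iβ̃_k = ∑_j s_j exp(-iπ(2k+1)j/n)` are the eigenvalues of `S`. -/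
theorem real_schur_form_skew_circulant_even (m : ℕ) (hm : 0 < m) (s : ℕ → ℝ) :
    let n : ℕ := 2 * m
    let S : Matrix (Fin n) (Fin n) ℝ :=
      Matrix.of fun j k : Fin n =>
        if (k.1 : ℕ) ≤ j.1 then s (j.1 - k.1) else -s (n - (k.1 - j.1))
    let lam : ℕ → ℂ := fun k =>
      ∑ j : Fin n,
        (s j.1 : ℂ) *
          Complex.exp (-(Real.pi * Complex.I * (2 * (k : ℂ) + 1) * (j.1 : ℂ) / (n : ℂ)))
    let Ut : Matrix (Fin n) (Fin n) ℝ :=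
      Matrix.of fun j i : Fin n =>
        if (i.1 : ℕ) < m then
          Real.sqrt 2 *
            (Real.cos (Real.pi * (2 * (i.1 : ℝ) + 1) * (j.1 : ℝ) / (n : ℝ)) / Real.sqrt n)
        else
          Real.sqrt 2 *
            (Real.sin (Real.pi * (2 * ((n - 1 - i.1 : ℕ) : ℝ) + 1) * (j.1 : ℝ) / (n : ℝ)) /
              Real.sqrt n)
    let Sig : Matrix (Fin n) (Fin n) ℝ :=
      Matrix.of fun i j : Fin n =>
        if i = j then (lam (min i.1 (n - 1 - i.1))).re
        else if (i.1 : ℕ) + (j.1 : ℕ) = n - 1 then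
          (if (i.1 : ℕ) < m then (lam i.1).im else -((lam (n - 1 - i.1)).im))
        else 0
    Utᵀ * Ut = 1 ∧ Ut * Utᵀ = 1 ∧ Utᵀ * S * Ut = Sig := by
  intro n S lam Ut Sig
  have hnm : n = 2 * m := rfl
  have hm' : (m:ℝ) ≠ 0 := Nat.cast_ne_zero.mpr hm.ne'
  have h2 : Real.sqrt 2 * Real.sqrt 2 = 2 := Real.mul_self_sqrt (by norm_num)
  have hr : Real.sqrt (2*(m:ℝ)) * Real.sqrt (2*(m:ℝ)) = 2*(m:ℝ) :=
    Real.mul_self_sqrt (by positivity)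
  have G1 : Utᵀ * Ut = 1 := by
    ext i i'
    rw [Matrix.mul_apply, Matrix.one_apply]
    simp only [Matrix.transpose_apply, Ut, Matrix.of_apply, n]
    have key : ∀ x y : ℝ, Real.sqrt 2 * (x / Real.sqrt (2*(m:ℝ))) * (Real.sqrt 2 * (y / Real.sqrt (2*(m:ℝ)))) = x * y * (2/(2*(m:ℝ))) := by
      intro x y
      rw [show Real.sqrt 2 * (x / Real.sqrt (2*(m:ℝ))) * (Real.sqrt 2 * (y / Real.sqrt (2*(m:ℝ))))
          = (Real.sqrt 2 * Real.sqrt 2) * (x*y) / (Real.sqrt (2*(m:ℝ)) * Real.sqrt (2*(m:ℝ))) from by ring, h2, hr]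
      ring
    have hone : (m:ℝ) * (2/(2*(m:ℝ))) = 1 := by field_simp
    by_cases hi : (i.1 : ℕ) < m <;> by_cases hi' : (i'.1 : ℕ) < m
    · simp only [if_pos hi, if_pos hi']
      trans ∑ x : Fin (2*m), Real.cos (Real.pi*(2*(i.1:ℝ)+1)*(x.1:ℝ)/(2*(m:ℝ)))
          * Real.cos (Real.pi*(2*(i'.1:ℝ)+1)*(x.1:ℝ)/(2*(m:ℝ))) * (2/(2*(m:ℝ)))
      · refine Finset.sum_congr rfl (fun x _ => ?_)
        push_cast
        rw [key]
      rw [← Finset.sum_mul, sum_cc m i.1 i'.1 hi hi' hm]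
      by_cases he : i = i'
      · rw [if_pos (congrArg Fin.val he), if_pos he, hone]
      · rw [if_neg (fun h => he (Fin.ext h)), if_neg he, zero_mul]
    · simp only [if_pos hi, if_neg hi']
      trans ∑ x : Fin (2*m), Real.cos (Real.pi*(2*(i.1:ℝ)+1)*(x.1:ℝ)/(2*(m:ℝ)))
          * Real.sin (Real.pi*(2*((2*m-1-i'.1 : ℕ):ℝ)+1)*(x.1:ℝ)/(2*(m:ℝ))) * (2/(2*(m:ℝ)))
      · refine Finset.sum_congr rfl (fun x _ => ?_)
        push_cast
        rw [key]
      rw [← Finset.sum_mul, sum_cs m i.1 (2*m-1-i'.1) hm, zero_mul,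
        if_neg (fun h => absurd (congrArg Fin.val h) (by omega))]
    · simp only [if_neg hi, if_pos hi']
      trans ∑ x : Fin (2*m), Real.cos (Real.pi*(2*(i'.1:ℝ)+1)*(x.1:ℝ)/(2*(m:ℝ)))
          * Real.sin (Real.pi*(2*((2*m-1-i.1 : ℕ):ℝ)+1)*(x.1:ℝ)/(2*(m:ℝ))) * (2/(2*(m:ℝ)))
      · refine Finset.sum_congr rfl (fun x _ => ?_)
        push_cast
        rw [key]
        ring
      rw [← Finset.sum_mul, sum_cs m i'.1 (2*m-1-i.1) hm, zero_mul,
        if_neg (fun h => absurd (congrArg Fin.val h) (by omega))]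
    · simp only [if_neg hi, if_neg hi']
      trans ∑ x : Fin (2*m), Real.sin (Real.pi*(2*((2*m-1-i.1 : ℕ):ℝ)+1)*(x.1:ℝ)/(2*(m:ℝ)))
          * Real.sin (Real.pi*(2*((2*m-1-i'.1 : ℕ):ℝ)+1)*(x.1:ℝ)/(2*(m:ℝ))) * (2/(2*(m:ℝ)))
      · refine Finset.sum_congr rfl (fun x _ => ?_)
        push_cast
        rw [key]
      rw [← Finset.sum_mul, sum_ss m (2*m-1-i.1) (2*m-1-i'.1) (by omega) (by omega) hm]
      by_cases he : i = i'
      · rw [if_pos (by rw [he]), if_pos he, hone]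
      · have hv : i.1 ≠ i'.1 := fun h => he (Fin.ext h)
        have h1 := i.isLt
        have h2 := i'.isLt
        rw [if_neg (by omega), if_neg he, zero_mul]
  refine ⟨G1, mul_eq_one_comm.mp G1, ?_⟩
  have hlam : ∀ k : ℕ, lam k = lamc m s k := by
    intro k
    simp only [lam, lamc, n]
    refine Finset.sum_congr rfl (fun b _ => ?_)
    congr 2
    push_cast
    ring
  have SU : S * Ut = Ut * Sig := by
    ext j i
    rw [Matrix.mul_apply, Matrix.mul_apply]
    simp only [S, Ut, Sig, Matrix.of_apply, n]
    have hjlt : (j.1 : ℕ) < 2*m := by have := j.isLt; omega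
    have hilt : (i.1 : ℕ) < 2*m := by have := i.isLt; omega
    by_cases hi : (i.1 : ℕ) < m
    · simp only [if_pos hi]
      have hq : 2*m-1-i.1 < 2*m := by omega
      set q : Fin (2*m) := ⟨2*m-1-i.1, hq⟩ with hqdef
      have hq1 : (q : ℕ) = 2*m-1-i.1 := rfl
      have hne : (i : Fin (2*m)) ≠ q := fun h => by
        have := congrArg Fin.val h; omega
      have hg : ∀ a : Fin (2*m), a ≠ i → a ≠ q →
          (if a = i then (lam (min a.1 (2*m-1-a.1))).re
           else if (a.1:ℕ) + i.1 = 2*m-1 then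
             (if (a.1:ℕ) < m then (lam a.1).im else -((lam (2*m-1-a.1)).im)) else 0) = 0 := by
        intro a ha1 ha2
        rw [if_neg ha1, if_neg]
        intro hc
        exact ha2 (Fin.ext (by omega))
      trans (∑ a : Fin (2*m), ((if (a.1:ℕ) ≤ j.1 then s (j.1-a.1) else -s (2*m-(a.1-j.1)))
          * Real.cos (Real.pi*(2*(i.1:ℝ)+1)*(a.1:ℝ)/(2*(m:ℝ)))) * (Real.sqrt 2 / Real.sqrt (2*(m:ℝ))))
      · refine Finset.sum_congr rfl (fun a _ => ?_)
        push_cast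
        ring
      rw [← Finset.sum_mul, (eigenReIm m hm s i.1 j).1]
      refine Eq.trans ?_ (sum_pair' i q hne _ _ hg).symm
      beta_reduce
      rw [if_pos hi, if_neg (show ¬((q:ℕ) < m) by omega), if_pos rfl,
        min_eq_left (by omega : i.1 ≤ 2*m-1-i.1),
        if_neg hne.symm, if_pos (show (q:ℕ) + i.1 = 2*m-1 by omega),
        if_neg (show ¬((q:ℕ) < m) by omega),
        show 2*m-1-(q:ℕ) = i.1 from by omega]
      rw [hlam i.1]
      push_cast
      ring
    · simp only [if_neg hi]
      have hq : 2*m-1-i.1 < 2*m := by omega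
      set q : Fin (2*m) := ⟨2*m-1-i.1, hq⟩ with hqdef
      have hq1 : (q : ℕ) = 2*m-1-i.1 := rfl
      have hne : (i : Fin (2*m)) ≠ q := fun h => by
        have := congrArg Fin.val h; omega
      have hg : ∀ a : Fin (2*m), a ≠ i → a ≠ q →
          (if a = i then (lam (min a.1 (2*m-1-a.1))).re
           else if (a.1:ℕ) + i.1 = 2*m-1 then
             (if (a.1:ℕ) < m then (lam a.1).im else -((lam (2*m-1-a.1)).im)) else 0) = 0 := by
        intro a ha1 ha2
        rw [if_neg ha1, if_neg]
        intro hc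
        exact ha2 (Fin.ext (by omega))
      trans (∑ a : Fin (2*m), ((if (a.1:ℕ) ≤ j.1 then s (j.1-a.1) else -s (2*m-(a.1-j.1)))
          * Real.sin (Real.pi*(2*((2*m-1-i.1 : ℕ):ℝ)+1)*(a.1:ℝ)/(2*(m:ℝ)))) * (Real.sqrt 2 / Real.sqrt (2*(m:ℝ))))
      · refine Finset.sum_congr rfl (fun a _ => ?_)
        push_cast
        ring
      rw [← Finset.sum_mul, (eigenReIm m hm s (2*m-1-i.1) j).2]
      refine Eq.trans ?_ (sum_pair' i q hne _ _ hg).symm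
      beta_reduce
      rw [if_neg hi, if_pos (show (q:ℕ) < m by omega), if_pos rfl,
        min_eq_right (by omega : 2*m-1-i.1 ≤ i.1),
        if_neg hne.symm, if_pos (show (q:ℕ) + i.1 = 2*m-1 by omega),
        if_pos (show (q:ℕ) < m by omega), hq1]
      rw [hlam (2*m-1-i.1)]
      push_cast
      ring
  rw [Matrix.mul_assoc, SU, ← Matrix.mul_assoc, G1, Matrix.one_mul]
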